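/- Let (Ω, d) be a compact metric space and T : Ω → Ω a minimal isometry (i.e., every forward orbit is dense and d(Tω₁, Tω₂) = d(ω₁, ω₂) for all ω₁, ω₂). Then PRP(T) = Ω; in particular the system (Ω, T) satisfies TRP. -/
import Mathlib


def PRPset {Ω : Type*} [PseudoMetricSpace Ω] (T : Ω → Ω) : Set Ω :=
  {ω | ∀ ε > (0 : ℝ), ∀ r : ℕ, 0 < r → ∃ q : ℕ, 0 < q ∧
    ∀ n ≤ r * q, dist (T^[n] ω) (T^[n + q] ω) < ε}

/-- A minimal isometry of a compact metric space satisfies the global (hence topological)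
repetition property. -/
theorem minimal_isometry_grp {Ω : Type*} [MetricSpace Ω] [CompactSpace Ω]
    (T : Ω → Ω) (hiso : Isometry T)
    (hmin : ∀ ω : Ω, Dense (Set.range fun n : ℕ => T^[n] ω)) :
    PRPset T = Set.univ ∧ Dense (PRPset T) := by
  have huniv : PRPset T = Set.univ := by
    ext ω
    simp only [Set.mem_univ, iff_true]
    intro ε hε r _hr
    -- use density of the orbit of T ω to find a return close to ω
    obtain ⟨x, hxd, hx⟩ := Metric.dense_iff.mp (hmin (T ω)) ω ε hε
    obtain ⟨m, rfl⟩ := hx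
    refine ⟨m + 1, Nat.succ_pos m, fun n _ => ?_⟩
    have hiter : ∀ k : ℕ, Isometry (T^[k]) := fun k => by
      induction k with
      | zero => simpa using isometry_id
      | succ k ih => rw [Function.iterate_succ']; exact hiso.comp ih
    have heq : dist (T^[n] ω) (T^[n + (m + 1)] ω) = dist ω (T^[m + 1] ω) := by
      conv_lhs => rw [Function.iterate_add_apply]
      exact (hiter n).dist_eq ω (T^[m + 1] ω)
    rw [heq]
    have : T^[m] (T ω) = T^[m + 1] ω := by
      rw [Function.iterate_succ_apply]
    rw [← this, dist_comm]
    simpa using hxd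
  exact ⟨huniv, by rw [huniv]; exact dense_univ⟩
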